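/- Let (Ω, 𝓕, μ) be a probability space, 𝒳 a measurable space, 𝒴 a finite nonempty set with the discrete σ-algebra, H a separable real Hilbert space, ψ : 𝒴 → H, and X : Ω → 𝒳, Y : Ω → 𝒴 measurable. Let h* : 𝒳 → H be measurable such that h* ∘ X is a version of the conditional expectation of ψ ∘ Y given the σ-algebra generated by X. Then for every measurable f : 𝒳 → 𝒴: E‖ψ(f(X)) − ψ(Y)‖² = E‖ψ(f(X)) − h*(X)‖² + E‖ψ(Y) − h*(X)‖². Consequently, any measurable f* : 𝒳 → 𝒴 with f*(x) ∈ argmin_{y ∈ 𝒴} ‖ψ(y) − h*(x)‖ for all x satisfies E‖ψ(f*(X)) − ψ(Y)‖² ≤ E‖ψ(f(X)) − ψ(Y)‖² for every measurable f : 𝒳 → 𝒴. -/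

import Mathlib

open MeasureTheory
open scoped RealInnerProductSpace

section Aux

variable {Ω : Type*} [MeasurableSpace Ω] {μ : Measure Ω}
  {H : Type*} [NormedAddCommGroup H] [InnerProductSpace ℝ H]

lemma integral_norm_sq_coeFn_aux (w : Lp H 2 μ) : ∫ ω, ‖w ω‖ ^ 2 ∂μ = ‖w‖ ^ 2 := by
  rw [← real_inner_self_eq_norm_sq, L2.inner_def]
  exact integral_congr_ae
    (Filter.Eventually.of_forall fun ω => (real_inner_self_eq_norm_sq (w ω)).symm)

lemma l2_pythagoras_aux (A B P : Lp H 2 μ) (h : ⟪A - P, B - P⟫ = 0) :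
    ∫ ω, ‖A ω - B ω‖ ^ 2 ∂μ =
      (∫ ω, ‖A ω - P ω‖ ^ 2 ∂μ) + ∫ ω, ‖B ω - P ω‖ ^ 2 ∂μ := by
  have h1 : ∫ ω, ‖A ω - B ω‖ ^ 2 ∂μ = ‖A - B‖ ^ 2 := by
    rw [← integral_norm_sq_coeFn_aux (A - B)]
    exact integral_congr_ae ((Lp.coeFn_sub A B).mono fun ω hω =>
      show ‖A ω - B ω‖ ^ 2 = ‖(A - B : Lp H 2 μ) ω‖ ^ 2 by rw [hω, Pi.sub_apply])
  have h2 : ∫ ω, ‖A ω - P ω‖ ^ 2 ∂μ = ‖A - P‖ ^ 2 := by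
    rw [← integral_norm_sq_coeFn_aux (A - P)]
    exact integral_congr_ae ((Lp.coeFn_sub A P).mono fun ω hω =>
      show ‖A ω - P ω‖ ^ 2 = ‖(A - P : Lp H 2 μ) ω‖ ^ 2 by rw [hω, Pi.sub_apply])
  have h3 : ∫ ω, ‖B ω - P ω‖ ^ 2 ∂μ = ‖B - P‖ ^ 2 := by
    rw [← integral_norm_sq_coeFn_aux (B - P)]
    exact integral_congr_ae ((Lp.coeFn_sub B P).mono fun ω hω =>
      show ‖B ω - P ω‖ ^ 2 = ‖(B - P : Lp H 2 μ) ω‖ ^ 2 by rw [hω, Pi.sub_apply])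
  rw [h1, h2, h3]
  have hAB : A - B = (A - P) - (B - P) := by abel
  rw [hAB, norm_sub_sq_real, h]
  ring

theorem risk_decomposition_aux
    {Ω : Type*} (m : MeasurableSpace Ω) [mΩ : MeasurableSpace Ω] (μ : Measure Ω)
    [IsProbabilityMeasure μ]
    {X : Type*} [MeasurableSpace X]
    {Y : Type*} [Fintype Y] [Nonempty Y] [MeasurableSpace Y] [DiscreteMeasurableSpace Y]
    {H : Type*} [NormedAddCommGroup H] [InnerProductSpace ℝ H] [CompleteSpace H]
    [SecondCountableTopology H] [MeasurableSpace H] [BorelSpace H]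
    (ψ : Y → H)
    (Xv : Ω → X) (Yv : Ω → Y) (hXv : Measurable Xv) (hYv : Measurable Yv)
    (hm : m ≤ mΩ) (hXm : Measurable[m] Xv)
    (hstar : X → H)
    (hstar_condexp : (fun ω => hstar (Xv ω)) =ᵐ[μ]
      μ[fun ω => ψ (Yv ω)|m]) :
    (∀ f : X → Y, Measurable f →
      ∫ ω, ‖ψ (f (Xv ω)) - ψ (Yv ω)‖ ^ 2 ∂μ =
        (∫ ω, ‖ψ (f (Xv ω)) - hstar (Xv ω)‖ ^ 2 ∂μ) +
          ∫ ω, ‖ψ (Yv ω) - hstar (Xv ω)‖ ^ 2 ∂μ) ∧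
    (∀ fstar : X → Y, Measurable fstar →
      (∀ x y, ‖ψ (fstar x) - hstar x‖ ≤ ‖ψ y - hstar x‖) →
      ∀ f : X → Y, Measurable f →
        ∫ ω, ‖ψ (fstar (Xv ω)) - ψ (Yv ω)‖ ^ 2 ∂μ ≤
          ∫ ω, ‖ψ (f (Xv ω)) - ψ (Yv ω)‖ ^ 2 ∂μ) := by
  classical
  haveI : SigmaFinite (μ.trim hm) := by
    haveI : IsFiniteMeasure (μ.trim hm) := isFiniteMeasure_trim hm
    infer_instance
  obtain ⟨C, hC⟩ : ∃ C : ℝ, ∀ y : Y, ‖ψ y‖ ≤ C := Finite.exists_le _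
  have hψmeas : Measurable ψ := measurable_of_countable ψ
  have memYv : ∀ g : Ω → Y, Measurable g → MemLp (fun ω => ψ (g ω)) 2 μ := by
    intro g hg
    exact MemLp.of_bound ((hψmeas.comp hg).stronglyMeasurable.aestronglyMeasurable) C
      (Filter.Eventually.of_forall fun ω => hC (g ω))
  have hB'mem : MemLp (fun ω => ψ (Yv ω)) 2 μ := memYv Yv hYv
  set B : Lp H 2 μ := hB'mem.toLp _ with hBdef
  have hBe : ⇑B =ᵐ[μ] fun ω => ψ (Yv ω) := hB'mem.coeFn_toLp
  set P : Lp H 2 μ := (condExpL2 H ℝ hm B : Lp H 2 μ) with hPdef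
  have hPm : AEStronglyMeasurable[m] (⇑P) μ := lpMeas.aestronglyMeasurable (condExpL2 H ℝ hm B)
  have hPcond : ⇑P =ᵐ[μ] μ[(fun ω => ψ (Yv ω))|m] := by
    refine ae_eq_condExp_of_forall_setIntegral_eq hm (hB'mem.integrable one_le_two)
      (fun s hs hμs => ?_) (fun s hs hμs => ?_) hPm
    · exact integrableOn_Lp_of_measure_ne_top P fact_one_le_two_ennreal.elim hμs.ne
    · rw [hPdef, integral_condExpL2_eq hm B hs hμs.ne]
      exact setIntegral_congr_ae (hm s hs) (hBe.mono fun ω hω _ => hω)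
  have hPstar : (fun ω => hstar (Xv ω)) =ᵐ[μ] ⇑P := hstar_condexp.trans hPcond.symm
  have key : ∀ f : X → Y, Measurable f →
      ∫ ω, ‖ψ (f (Xv ω)) - ψ (Yv ω)‖ ^ 2 ∂μ =
        (∫ ω, ‖ψ (f (Xv ω)) - hstar (Xv ω)‖ ^ 2 ∂μ) +
          ∫ ω, ‖ψ (Yv ω) - hstar (Xv ω)‖ ^ 2 ∂μ := by
    intro f hf
    have hA'mem : MemLp (fun ω => ψ (f (Xv ω))) 2 μ := memYv _ (hf.comp hXv)
    set A : Lp H 2 μ := hA'mem.toLp _ with hAdef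
    have hAe : ⇑A =ᵐ[μ] fun ω => ψ (f (Xv ω)) := hA'mem.coeFn_toLp
    have hAms : StronglyMeasurable[m] (fun ω => ψ (f (Xv ω))) :=
      Measurable.stronglyMeasurable ((hψmeas.comp hf).comp hXm)
    have hAm : AEStronglyMeasurable[m] (⇑A) μ := ⟨_, hAms, hAe⟩
    have hsub : AEStronglyMeasurable[m] (⇑(A - P)) μ :=
      AEStronglyMeasurable.congr (hAm.sub hPm) (Lp.coeFn_sub A P).symm
    have hkey := inner_condExpL2_eq_inner_fun (E := H) (𝕜 := ℝ) hm B (A - P) hsub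
    have h0 : ⟪B - P, A - P⟫ = 0 := by
      rw [inner_sub_left, sub_eq_zero]
      exact hkey.symm
    have hOrth : ⟪A - P, B - P⟫ = 0 := (real_inner_comm _ _).trans h0
    calc ∫ ω, ‖ψ (f (Xv ω)) - ψ (Yv ω)‖ ^ 2 ∂μ
        = ∫ ω, ‖A ω - B ω‖ ^ 2 ∂μ := by
          refine integral_congr_ae ((hAe.and hBe).mono fun ω h => ?_)
          simp only
          rw [h.1, h.2]
      _ = (∫ ω, ‖A ω - P ω‖ ^ 2 ∂μ) + ∫ ω, ‖B ω - P ω‖ ^ 2 ∂μ :=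
          l2_pythagoras_aux A B P hOrth
      _ = (∫ ω, ‖ψ (f (Xv ω)) - hstar (Xv ω)‖ ^ 2 ∂μ) +
            ∫ ω, ‖ψ (Yv ω) - hstar (Xv ω)‖ ^ 2 ∂μ := by
          congr 1
          · refine integral_congr_ae ((hAe.and hPstar).mono fun ω h => ?_)
            simp only
            rw [h.1, ← h.2]
          · refine integral_congr_ae ((hBe.and hPstar).mono fun ω h => ?_)
            simp only
            rw [h.1, ← h.2]
  have hstarmem : MemLp (fun ω => hstar (Xv ω)) 2 μ :=
    (memLp_congr_ae hPstar).mpr (Lp.memLp P)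
  have hint : ∀ g : X → Y, Measurable g →
      Integrable (fun ω => ‖ψ (g (Xv ω)) - hstar (Xv ω)‖ ^ 2) μ := by
    intro g hg
    have h2 : MemLp (fun ω => ψ (g (Xv ω)) - hstar (Xv ω)) 2 μ :=
      (memYv _ (hg.comp hXv)).sub hstarmem
    have h3 := h2.integrable_norm_rpow two_ne_zero ENNReal.ofNat_ne_top
    refine h3.congr (Filter.Eventually.of_forall fun ω => ?_)
    simp only
    rw [ENNReal.toReal_ofNat, Real.rpow_two]
  refine ⟨key, fun fstar hfstar hopt f hf => ?_⟩
  rw [key fstar hfstar, key f hf]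
  refine add_le_add_left (integral_mono_ae (hint fstar hfstar) (hint f hf) ?_) _
  exact Filter.Eventually.of_forall fun ω =>
    pow_le_pow_left₀ (norm_nonneg _) (hopt (Xv ω) (f (Xv ω))) 2

end Aux

/-- **Risk decomposition and Bayes optimality of nearest-neighbour decoding.**
With `h*(x) = E[ψ(Y) | X = x]`, for every measurable `f : 𝒳 → 𝒴`,
`E‖ψ(f(X)) − ψ(Y)‖² = E‖ψ(f(X)) − h*(X)‖² + E‖ψ(Y) − h*(X)‖²`; consequently any
measurable `f*` with `f*(x) ∈ argmin_y ‖ψ(y) − h*(x)‖` has minimal risk. -/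
theorem risk_decomposition_and_bayes_predictor
    {Ω : Type*} [MeasurableSpace Ω] (μ : Measure Ω) [IsProbabilityMeasure μ]
    {X : Type*} [MeasurableSpace X]
    {Y : Type*} [Fintype Y] [Nonempty Y] [MeasurableSpace Y] [DiscreteMeasurableSpace Y]
    {H : Type*} [NormedAddCommGroup H] [InnerProductSpace ℝ H] [CompleteSpace H]
    [SecondCountableTopology H] [MeasurableSpace H] [BorelSpace H]
    (ψ : Y → H)
    (Xv : Ω → X) (Yv : Ω → Y) (hXv : Measurable Xv) (hYv : Measurable Yv)
    (hstar : X → H) (hstar_meas : Measurable hstar)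
    (hstar_condexp : (fun ω => hstar (Xv ω)) =ᵐ[μ]
      μ[fun ω => ψ (Yv ω)|MeasurableSpace.comap Xv inferInstance]) :
    (∀ f : X → Y, Measurable f →
      ∫ ω, ‖ψ (f (Xv ω)) - ψ (Yv ω)‖ ^ 2 ∂μ =
        (∫ ω, ‖ψ (f (Xv ω)) - hstar (Xv ω)‖ ^ 2 ∂μ) +
          ∫ ω, ‖ψ (Yv ω) - hstar (Xv ω)‖ ^ 2 ∂μ) ∧
    (∀ fstar : X → Y, Measurable fstar →
      (∀ x y, ‖ψ (fstar x) - hstar x‖ ≤ ‖ψ y - hstar x‖) →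
      ∀ f : X → Y, Measurable f →
        ∫ ω, ‖ψ (fstar (Xv ω)) - ψ (Yv ω)‖ ^ 2 ∂μ ≤
          ∫ ω, ‖ψ (f (Xv ω)) - ψ (Yv ω)‖ ^ 2 ∂μ) :=
  risk_decomposition_aux (MeasurableSpace.comap Xv inferInstance) μ ψ Xv Yv hXv hYv
    hXv.comap_le (measurable_iff_comap_le.mpr le_rfl) hstar hstar_condexp
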